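/- Let X, Y : E → E be differentiable vector fields with div X (x) = 0 and div Y (x) = 0 for all x. Then for every x : E, VectorField.lieBracket ℝ X Y x = curl (fun y => Y y × X y) (x). (The identity [X,Y] = rot(Y × X) for divergence-free fields: the bracket of divergence-free fields is exact divergence-free.) -/

import Mathlib

open MeasureTheory RealInnerProductSpace

noncomputable section

abbrev E : Type := EuclideanSpace ℝ (Fin 3)

/-- The `i`-th standard basis vector of `E`. -/
def e (i : Fin 3) : E := EuclideanSpace.single i 1

/-- The curl (vorticity) of a vector field on `E`. -/
def curl (X : E → E) (x : E) : E :=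
  (WithLp.equiv 2 (Fin 3 → ℝ)).symm
    ![fderiv ℝ X x (e 1) 2 - fderiv ℝ X x (e 2) 1,
      fderiv ℝ X x (e 2) 0 - fderiv ℝ X x (e 0) 2,
      fderiv ℝ X x (e 0) 1 - fderiv ℝ X x (e 1) 0]

/-- The divergence of a vector field on `E`. -/
def div (X : E → E) (x : E) : ℝ := ∑ i, fderiv ℝ X x (e i) i

/-- The cross product on `E`. -/
def cross (a b : E) : E :=
  (WithLp.equiv 2 (Fin 3 → ℝ)).symm
    ![a 1 * b 2 - a 2 * b 1,
      a 2 * b 0 - a 0 * b 2,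
      a 0 * b 1 - a 1 * b 0]

infixl:74 " ×₃ " => cross


lemma piLp_sum_apply (f : Fin 3 → E) (k : Fin 3) : (∑ i, f i) k = ∑ i, f i k :=
  by rw [WithLp.ofLp_sum]; exact Finset.sum_apply k _ _

lemma fderiv_coord {f : E → E} {x : E} (hf : DifferentiableAt ℝ f x) (i : Fin 3) (v : E) :
    fderiv ℝ (fun y => f y i) x v = fderiv ℝ f x v i := by
  have h : (fun y => f y i) = (EuclideanSpace.proj i : E →L[ℝ] ℝ) ∘ f := rfl
  rw [h, fderiv_comp x (EuclideanSpace.proj i : E →L[ℝ] ℝ).differentiableAt hf,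
    ContinuousLinearMap.fderiv]
  rfl

lemma clm_apply_expand (L : E →L[ℝ] E) (v : E) (j : Fin 3) :
    L v j = ∑ i, v i * L (e i) j := by
  have hv : v = ∑ i, v i • e i := by
    ext k
    rw [piLp_sum_apply]
    simp [e, EuclideanSpace.single_apply]
  conv_lhs => rw [hv, map_sum]
  rw [piLp_sum_apply]
  simp

/-- For divergence-free fields, `[X, Y] = curl (Y × X)`. -/
theorem lieBracket_eq_curl_cross (X Y : E → E)
    (hX : Differentiable ℝ X) (hY : Differentiable ℝ Y)
    (hdX : ∀ x, div X x = 0) (hdY : ∀ x, div Y x = 0) (x : E) :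
    VectorField.lieBracket ℝ X Y x = curl (fun y => Y y ×₃ X y) x := by
  have hXc : ∀ i, DifferentiableAt ℝ (fun y => X y i) x :=
    differentiableAt_euclidean.mp (hX x)
  have hYc : ∀ i, DifferentiableAt ℝ (fun y => Y y i) x :=
    differentiableAt_euclidean.mp (hY x)
  have hC : DifferentiableAt ℝ (fun y => Y y ×₃ X y) x := by
    rw [differentiableAt_euclidean]
    intro i
    fin_cases i <;>
      simp only [cross, WithLp.equiv_symm_apply, PiLp.toLp_apply, Matrix.cons_val_zero, Matrix.cons_val_one,
        Matrix.head_cons, Fin.isValue, Matrix.cons_val_two, Matrix.tail_cons] <;>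
      [exact ((hYc 1).mul (hXc 2)).sub ((hYc 2).mul (hXc 1));
       exact ((hYc 2).mul (hXc 0)).sub ((hYc 0).mul (hXc 2));
       exact ((hYc 0).mul (hXc 1)).sub ((hYc 1).mul (hXc 0))]
  have hmul : ∀ (a b : Fin 3) (v : E), fderiv ℝ (fun y => Y y a * X y b) x v
      = fderiv ℝ Y x v a * X x b + Y x a * fderiv ℝ X x v b := by
    intro a b v
    rw [fderiv_fun_mul (hYc a) (hXc b)]
    simp only [ContinuousLinearMap.add_apply, ContinuousLinearMap.coe_smul',
      Pi.smul_apply, smul_eq_mul, fderiv_coord (hY x), fderiv_coord (hX x)]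
    ring
  have hcc : ∀ (v : E) (a b : Fin 3),
      fderiv ℝ (fun y => Y y a * X y b - Y y b * X y a) x v
        = fderiv ℝ Y x v a * X x b + Y x a * fderiv ℝ X x v b
          - (fderiv ℝ Y x v b * X x a + Y x b * fderiv ℝ X x v a) := by
    intro v a b
    rw [fderiv_fun_sub (f := fun y => Y y a * X y b) (g := fun y => Y y b * X y a)
        ((hYc a).mul (hXc b)) ((hYc b).mul (hXc a)),
      ContinuousLinearMap.sub_apply, hmul, hmul]
  have hcross_coord : ∀ (v : E) (j : Fin 3),
      fderiv ℝ (fun y => Y y ×₃ X y) x v j = fderiv ℝ (fun y => (Y y ×₃ X y) j) x v :=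
    fun v j => (fderiv_coord hC j v).symm
  have h0 : (fun y => (Y y ×₃ X y) (0 : Fin 3)) = fun y => Y y 1 * X y 2 - Y y 2 * X y 1 := by
    funext y; simp [cross]
  have h1 : (fun y => (Y y ×₃ X y) (1 : Fin 3)) = fun y => Y y 2 * X y 0 - Y y 0 * X y 2 := by
    funext y; simp [cross]
  have h2 : (fun y => (Y y ×₃ X y) (2 : Fin 3)) = fun y => Y y 0 * X y 1 - Y y 1 * X y 0 := by
    funext y; simp [cross]
  have hdX' : fderiv ℝ X x (e 0) 0 + fderiv ℝ X x (e 1) 1 + fderiv ℝ X x (e 2) 2 = 0 := by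
    have := hdX x; rw [div, Fin.sum_univ_three] at this; linarith
  have hdY' : fderiv ℝ Y x (e 0) 0 + fderiv ℝ Y x (e 1) 1 + fderiv ℝ Y x (e 2) 2 = 0 := by
    have := hdY x; rw [div, Fin.sum_univ_three] at this; linarith
  ext j
  have hL : VectorField.lieBracket ℝ X Y x j
      = (∑ i, X x i * fderiv ℝ Y x (e i) j) - (∑ i, Y x i * fderiv ℝ X x (e i) j) := by
    rw [VectorField.lieBracket, PiLp.sub_apply, clm_apply_expand, clm_apply_expand]
  rw [hL, Fin.sum_univ_three, Fin.sum_univ_three]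
  fin_cases j <;>
    simp only [curl, WithLp.equiv_symm_apply, PiLp.toLp_apply, Matrix.cons_val_zero, Matrix.cons_val_one,
      Matrix.head_cons, Matrix.cons_val_two, Matrix.tail_cons, Fin.sum_univ_three, Fin.reduceFinMk,
      hcross_coord, h0, h1, h2, hcc, Fin.isValue]
  · linear_combination (X x 0) * hdY' - (Y x 0) * hdX'
  · linear_combination (X x 1) * hdY' - (Y x 1) * hdX'
  · linear_combination (X x 2) * hdY' - (Y x 2) * hdX'
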